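/- For all natural numbers n, ∑_{j=0}^{n} j · binomial(2n, n-j) = (n/2)·binomial(2n, n); equivalently, 2·∑_{j=0}^{n} j·binomial(2n, n-j) = n·binomial(2n, n). -/

import Mathlib

theorem sum_choose_B1 (n : ℕ) :
    2 * ∑ j ∈ Finset.range (n + 1), j * Nat.choose (2 * n) (n - j) =
      n * Nat.choose (2 * n) n := by
  rcases Nat.eq_zero_or_pos n with h | hn
  · subst h; simp
  -- work in ℤ
  have key : ∀ j ∈ Finset.range n, (j : ℤ) * ((2*n).choose (n-j) : ℤ)
      = (fun j => (n:ℤ) * ((2*n-1).choose (n-j) : ℤ)) j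
        - (fun j => (n:ℤ) * ((2*n-1).choose (n-j) : ℤ)) (j+1) := by
    intro j hj
    simp only [Finset.mem_range] at hj
    set s := n - j - 1 with hs
    have h1 : n - j = s + 1 := by omega
    have h2 : n - (j+1) = s := by omega
    have h3 : 2*n = (2*n-1) + 1 := by omega
    set M := 2*n - 1 with hM
    dsimp only
    rw [h1, h2, h3]
    have pascal : (M+1).choose (s+1) = M.choose s + M.choose (s+1) :=
      Nat.choose_succ_succ M s
    have succ_mul : (M+1) * M.choose s = (M+1).choose (s+1) * (s+1) :=
      Nat.add_one_mul_choose_eq M s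
    have hj' : (j : ℤ) = (n : ℤ) - (s+1) := by
      have : j + (s+1) = n := by omega
      push_cast [← this]; ring
    have pascalZ : ((M+1).choose (s+1) : ℤ) = M.choose s + M.choose (s+1) := by
      exact_mod_cast pascal
    have succZ : ((M:ℤ)+1) * M.choose s = ((M+1).choose (s+1) : ℤ) * (s+1) := by
      exact_mod_cast succ_mul
    have hM1 : ((M:ℤ)+1) = 2*n := by
      have : M + 1 = 2*n := by omega
      exact_mod_cast this
    rw [hj']
    nlinarith [pascalZ, succZ, hM1]
  have tel : ∑ j ∈ Finset.range n, (j : ℤ) * ((2*n).choose (n-j) : ℤ)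
      = (n:ℤ) * ((2*n-1).choose n : ℤ) - (n:ℤ) * ((2*n-1).choose 0 : ℤ) := by
    rw [Finset.sum_congr rfl key, Finset.sum_range_sub']
    simp
  have total : ∑ j ∈ Finset.range (n+1), (j : ℤ) * ((2*n).choose (n-j) : ℤ)
      = (n:ℤ) * ((2*n-1).choose n : ℤ) := by
    rw [Finset.sum_range_succ, tel]
    simp
  -- combine: 2 * C(2n-1,n) = C(2n,n)
  have double : (2*n).choose n = 2 * (2*n-1).choose n := by
    have h3 : 2*n = (2*n-1) + 1 := by omega
    have hsym : (2*n-1).choose (n-1) = (2*n-1).choose n := by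
      have : (2*n-1) - n = n - 1 := by omega
      rw [← this, Nat.choose_symm (by omega)]
    have hn1 : n = (n-1) + 1 := by omega
    calc (2*n).choose n = ((2*n-1)+1).choose ((n-1)+1) := by rw [← h3, ← hn1]
      _ = (2*n-1).choose (n-1) + (2*n-1).choose ((n-1)+1) := Nat.choose_succ_succ _ _
      _ = 2 * (2*n-1).choose n := by rw [← hn1, hsym]; ring
  have final : (2 * ∑ j ∈ Finset.range (n+1), j * Nat.choose (2*n) (n-j) : ℤ)
      = (n * Nat.choose (2*n) n : ℤ) := by
    push_cast
    rw [total, double]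
    push_cast
    ring
  exact_mod_cast final
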